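/- For β > 1, the sum Σ_{j=1}^∞ j^{-2β} e^{-2 j^{-β} t} is bounded above and below by constant multiples (depending only on β) of ∫₀¹ u^{1-1/β} e^{-2ut} du for all t ≥ 0, and hence by constant multiples of (t+1)^{-(2-1/β)}. -/

import Mathlib

open Real


private lemma sq_mul_exp_neg_le {x : ℝ} (hx : 0 ≤ x) : x ^ 2 * exp (-x) ≤ 4 := by
  have h1 : x / 2 ≤ exp (x / 2) := by
    have := Real.add_one_le_exp (x / 2); linarith
  have h2 : (x / 2) ^ 2 ≤ exp (x / 2) ^ 2 := by
    apply pow_le_pow_left₀ (by linarith) h1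
  have h3 : exp (x / 2) ^ 2 = exp x := by
    rw [sq, ← Real.exp_add]; ring_nf
  have h5 : x ^ 2 ≤ 4 * exp x := by nlinarith
  calc x ^ 2 * exp (-x) ≤ (4 * exp x) * exp (-x) :=
        mul_le_mul_of_nonneg_right h5 (exp_pos _).le
    _ = 4 := by rw [mul_assoc, ← exp_add]; simp

private lemma rpow_sub_rpow_ge (s : ℝ) (hs : 1 < s) (a : ℝ) (ha : 1 ≤ a) :
    (s - 1) * (a + 1) ^ (-s) ≤ a ^ (1 - s) - (a + 1) ^ (1 - s) := by
  have ha0 : (0:ℝ) < a := lt_of_lt_of_le one_pos ha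
  obtain ⟨c, hc, hceq⟩ := exists_hasDerivAt_eq_slope (fun x : ℝ => x ^ (1 - s))
      (fun x : ℝ => (1 - s) * x ^ (1 - s - 1)) (by linarith : a < a + 1)
      (fun x hx => (Real.continuousAt_rpow_const x (1 - s)
        (Or.inl (ne_of_gt (lt_of_lt_of_le ha0 hx.1)))).continuousWithinAt)
      (fun x hx => Real.hasDerivAt_rpow_const (Or.inl (ne_of_gt (lt_trans ha0 hx.1))))
  have hc0 : (0:ℝ) < c := lt_trans ha0 hc.1
  have h1 : a ^ (1 - s) - (a + 1) ^ (1 - s) = (s - 1) * c ^ (-s) := by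
    have : (1 - s - 1) = -s := by ring
    rw [this] at hceq
    have hd : (a + 1 - a) = 1 := by ring
    rw [hd, div_one] at hceq
    linarith [hceq]
  rw [h1]
  have h2 : (a + 1) ^ (-s) ≤ c ^ (-s) :=
    Real.rpow_le_rpow_of_nonpos hc0 hc.2.le (by linarith)
  exact mul_le_mul_of_nonneg_left h2 (by linarith)

private lemma tsum_tail_rpow_le (s : ℝ) (hs : 1 < s) (N : ℕ) (hN : 1 ≤ N) :
    ∑' k : ℕ, ((N : ℝ) + k + 1) ^ (-s) ≤ (N : ℝ) ^ (1 - s) / (s - 1) := by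
  have hs1 : (0:ℝ) < s - 1 := by linarith
  have hN0 : (1:ℝ) ≤ (N:ℝ) := by exact_mod_cast hN
  set g : ℕ → ℝ := fun k => ((N : ℝ) + k) ^ (1 - s) with hgdef
  have hkpos : ∀ k : ℕ, (1:ℝ) ≤ (N:ℝ) + k := fun k =>
    le_add_of_le_of_nonneg hN0 (Nat.cast_nonneg k)
  have hstep : ∀ k : ℕ, (s - 1) * ((N:ℝ) + k + 1) ^ (-s) ≤ g k - g (k + 1) := by
    intro k
    have h := rpow_sub_rpow_ge s hs ((N:ℝ) + k) (hkpos k)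
    have hc : ((N:ℝ) + (k + 1 : ℕ)) = ((N:ℝ) + k) + 1 := by push_cast; ring
    simp only [hgdef, hc]
    exact h
  have hgto : Filter.Tendsto g Filter.atTop (nhds 0) := by
    have h1 : Filter.Tendsto (fun k : ℕ => (N:ℝ) + k) Filter.atTop Filter.atTop :=
      Filter.tendsto_atTop_add_const_left _ _ tendsto_natCast_atTop_atTop
    have h2 := (tendsto_rpow_neg_atTop hs1).comp h1
    have : (1 - s) = -(s - 1) := by ring
    rw [hgdef]
    simp only [this]
    exact h2
  have hnn : ∀ k : ℕ, 0 ≤ g k - g (k + 1) := fun k =>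
    le_trans (by positivity) (hstep k)
  have htel : HasSum (fun k => g k - g (k + 1)) (g 0) := by
    rw [hasSum_iff_tendsto_nat_of_nonneg hnn]
    have he : ∀ n, ∑ i ∈ Finset.range n, (g i - g (i + 1)) = g 0 - g n := fun n =>
      Finset.sum_range_sub' g n
    simp_rw [he]
    simpa using Filter.Tendsto.const_sub (g 0) hgto
  have hsum2 : Summable (fun k => (g k - g (k + 1)) * (s - 1)⁻¹) :=
    htel.summable.mul_right _
  have hle : ∀ k : ℕ, ((N:ℝ) + k + 1) ^ (-s) ≤ (g k - g (k + 1)) * (s - 1)⁻¹ := by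
    intro k
    have h := hstep k
    calc ((N:ℝ) + k + 1) ^ (-s) = ((s - 1) * ((N:ℝ) + k + 1) ^ (-s)) * (s - 1)⁻¹ := by
          field_simp
      _ ≤ (g k - g (k + 1)) * (s - 1)⁻¹ :=
          mul_le_mul_of_nonneg_right h (by positivity)
  have hsum1 : Summable (fun k : ℕ => ((N:ℝ) + k + 1) ^ (-s)) :=
    Summable.of_nonneg_of_le (fun k => by positivity) hle hsum2
  calc ∑' k : ℕ, ((N:ℝ) + k + 1) ^ (-s) ≤ ∑' k, (g k - g (k + 1)) * (s - 1)⁻¹ :=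
        Summable.tsum_le_tsum hle hsum1 hsum2
    _ = g 0 * (s - 1)⁻¹ := by rw [tsum_mul_right, htel.tsum_eq]
    _ = (N : ℝ) ^ (1 - s) / (s - 1) := by simp [hgdef, div_eq_mul_inv]

private lemma summable_base (β : ℝ) (hβ : 1 < β) :
    Summable (fun j : ℕ => ((j : ℝ) + 1) ^ (-(2 * β))) := by
  have h2 : Summable (fun n : ℕ => (n : ℝ) ^ (-(2 * β))) :=
    Real.summable_nat_rpow.2 (by linarith)
  have h3 := (summable_nat_add_iff 1).2 h2
  refine h3.congr fun j => ?_
  push_cast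
  ring_nf

private lemma term_nonneg (β t : ℝ) (j : ℕ) :
    0 ≤ ((j : ℝ) + 1) ^ (-(2 * β)) * exp (-2 * ((j : ℝ) + 1) ^ (-β) * t) := by positivity

private lemma term_le_base (β t : ℝ) (ht : 0 ≤ t) (j : ℕ) :
    ((j : ℝ) + 1) ^ (-(2 * β)) * exp (-2 * ((j : ℝ) + 1) ^ (-β) * t)
      ≤ ((j : ℝ) + 1) ^ (-(2 * β)) := by
  nth_rewrite 2 [← mul_one (((j:ℝ) + 1) ^ (-(2 * β)))]
  apply mul_le_mul_of_nonneg_left _ (by positivity)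
  have harg : -2 * ((j : ℝ) + 1) ^ (-β) * t ≤ 0 := by
    have h1 : (0:ℝ) ≤ ((j : ℝ) + 1) ^ (-β) := by positivity
    nlinarith
  calc exp (-2 * ((j : ℝ) + 1) ^ (-β) * t) ≤ exp 0 := exp_le_exp.2 harg
    _ = 1 := exp_zero

private lemma summable_term (β : ℝ) (hβ : 1 < β) (t : ℝ) (ht : 0 ≤ t) :
    Summable (fun j : ℕ => ((j : ℝ) + 1) ^ (-(2 * β)) * exp (-2 * ((j : ℝ) + 1) ^ (-β) * t)) :=
  Summable.of_nonneg_of_le (term_nonneg β t) (term_le_base β t ht) (summable_base β hβ)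

private lemma lemA (β : ℝ) (hβ : 1 < β) :
    ∃ c : ℝ, 0 < c ∧ ∀ t : ℝ, 0 ≤ t →
      c * (t + 1) ^ (-(2 - 1 / β)) ≤
        ∑' j : ℕ, ((j : ℝ) + 1) ^ (-(2 * β)) * exp (-2 * ((j : ℝ) + 1) ^ (-β) * t) := by
  refine ⟨2 ^ (1 - 2 * β) * 2 ^ (-(2 * β)) * exp (-2), by positivity, ?_⟩
  intro t ht
  have hβ0 : (0:ℝ) < β := by linarith
  have ht1 : (0:ℝ) < t + 1 := by linarith
  set Q := (t + 1) ^ (1 / β) with hQdef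
  have hQ0 : (0:ℝ) < Q := by positivity
  have hQ1 : (1:ℝ) ≤ Q := Real.one_le_rpow (by linarith) (by positivity)
  set N := ⌈Q⌉₊ with hNdef
  have hN1 : 0 < N := Nat.ceil_pos.2 hQ0
  have hN0R : (0:ℝ) < (N:ℝ) := by exact_mod_cast hN1
  have hNQ : Q ≤ (N:ℝ) := Nat.le_ceil Q
  have hN2Q : (N:ℝ) ≤ 2 * Q := by
    have := Nat.ceil_lt_add_one hQ0.le
    have h2 : Q + 1 ≤ 2 * Q := by linarith
    linarith
  have hQβ : Q ^ β = t + 1 := by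
    rw [hQdef, ← Real.rpow_mul ht1.le]
    rw [show 1 / β * β = 1 by field_simp]
    exact Real.rpow_one _
  have key : ∀ j ∈ Finset.Ico N (2 * N),
      (2 * (N:ℝ)) ^ (-(2 * β)) * exp (-2) ≤
        ((j : ℝ) + 1) ^ (-(2 * β)) * exp (-2 * ((j : ℝ) + 1) ^ (-β) * t) := by
    intro j hj
    rw [Finset.mem_Ico] at hj
    have hj1 : (N:ℝ) ≤ (j:ℝ) := by exact_mod_cast hj.1
    have hj2 : (j:ℝ) + 1 ≤ 2 * (N:ℝ) := by
      have : j + 1 ≤ 2 * N := hj.2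
      exact_mod_cast this
    have hjpos : (0:ℝ) < (j:ℝ) + 1 := by positivity
    have f1 : (2 * (N:ℝ)) ^ (-(2 * β)) ≤ ((j:ℝ) + 1) ^ (-(2 * β)) :=
      Real.rpow_le_rpow_of_nonpos hjpos hj2 (by linarith)
    have hb : Q ≤ (j:ℝ) + 1 := by linarith [hNQ, hj1]
    have hpow : t + 1 ≤ ((j:ℝ) + 1) ^ β := by
      have := Real.rpow_le_rpow hQ0.le hb hβ0.le
      rw [hQβ] at this; exact this
    have hβj : ((j:ℝ) + 1) ^ (-β) * t ≤ 1 := by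
      rw [Real.rpow_neg hjpos.le]
      have hβjpos : (0:ℝ) < ((j:ℝ) + 1) ^ β := by positivity
      rw [inv_mul_le_iff₀ hβjpos]
      nlinarith
    have f2 : exp (-2) ≤ exp (-2 * ((j:ℝ) + 1) ^ (-β) * t) := by
      apply exp_le_exp.2
      nlinarith [Real.rpow_nonneg hjpos.le (-β)]
    exact mul_le_mul f1 f2 (exp_pos _).le (by positivity)
  have hcard : (Finset.Ico N (2 * N)).card = N := by rw [Nat.card_Ico]; omega
  have hlow : (N:ℝ) * ((2 * (N:ℝ)) ^ (-(2 * β)) * exp (-2)) ≤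
      ∑ j ∈ Finset.Ico N (2 * N),
        ((j : ℝ) + 1) ^ (-(2 * β)) * exp (-2 * ((j : ℝ) + 1) ^ (-β) * t) := by
    calc (N:ℝ) * ((2 * (N:ℝ)) ^ (-(2 * β)) * exp (-2))
        = ∑ _j ∈ Finset.Ico N (2 * N), (2 * (N:ℝ)) ^ (-(2 * β)) * exp (-2) := by
          rw [Finset.sum_const, hcard, nsmul_eq_mul]
      _ ≤ _ := Finset.sum_le_sum key
  have hsum := Summable.sum_le_tsum (Finset.Ico N (2 * N))
    (fun j _ => term_nonneg β t j) (summable_term β hβ t ht)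
  have e1 : (2 * (N:ℝ)) ^ (-(2 * β)) = 2 ^ (-(2 * β)) * (N:ℝ) ^ (-(2 * β)) :=
    Real.mul_rpow (by norm_num) (Nat.cast_nonneg N)
  have e2 : (N:ℝ) * (N:ℝ) ^ (-(2 * β)) = (N:ℝ) ^ (1 - 2 * β) := by
    rw [show (1 - 2 * β) = 1 + -(2 * β) by ring, Real.rpow_add hN0R, Real.rpow_one]
  have e3 : (2 * Q) ^ (1 - 2 * β) ≤ (N:ℝ) ^ (1 - 2 * β) :=
    Real.rpow_le_rpow_of_nonpos hN0R hN2Q (by linarith)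
  have e4 : (2 * Q) ^ (1 - 2 * β) = 2 ^ (1 - 2 * β) * Q ^ (1 - 2 * β) :=
    Real.mul_rpow (by norm_num) hQ0.le
  have e5 : Q ^ (1 - 2 * β) = (t + 1) ^ (-(2 - 1 / β)) := by
    rw [hQdef, ← Real.rpow_mul ht1.le]
    congr 1
    field_simp
    ring
  calc 2 ^ (1 - 2 * β) * 2 ^ (-(2 * β)) * exp (-2) * (t + 1) ^ (-(2 - 1 / β))
      = 2 ^ (-(2 * β)) * exp (-2) * ((2 * Q) ^ (1 - 2 * β)) := by rw [e4, e5]; ring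
    _ ≤ 2 ^ (-(2 * β)) * exp (-2) * (N:ℝ) ^ (1 - 2 * β) := by
        apply mul_le_mul_of_nonneg_left e3 (by positivity)
    _ = (N:ℝ) * ((2 * (N:ℝ)) ^ (-(2 * β)) * exp (-2)) := by rw [e1, ← e2]; ring
    _ ≤ _ := hlow
    _ ≤ _ := hsum

set_option maxHeartbeats 800000 in
private lemma lemB (β : ℝ) (hβ : 1 < β) :
    ∃ C : ℝ, 0 < C ∧ ∀ t : ℝ, 0 ≤ t →
      (∑' j : ℕ, ((j : ℝ) + 1) ^ (-(2 * β)) * exp (-2 * ((j : ℝ) + 1) ^ (-β) * t))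
        ≤ C * (t + 1) ^ (-(2 - 1 / β)) := by
  have h2β : (0:ℝ) < 2 * β - 1 := by linarith
  refine ⟨2 * exp 2 + 1 / (2 * β - 1), by positivity, ?_⟩
  intro t ht
  have hβ0 : (0:ℝ) < β := by linarith
  have ht1 : (0:ℝ) < t + 1 := by linarith
  set Q := (t + 1) ^ (1 / β) with hQdef
  have hQ0 : (0:ℝ) < Q := by positivity
  have hQ1 : (1:ℝ) ≤ Q := Real.one_le_rpow (by linarith) (by positivity)
  set N := ⌈Q⌉₊ with hNdef
  have hN1 : 0 < N := Nat.ceil_pos.2 hQ0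
  have hN0R : (0:ℝ) < (N:ℝ) := by exact_mod_cast hN1
  have hNQ : Q ≤ (N:ℝ) := Nat.le_ceil Q
  have hN2Q : (N:ℝ) ≤ 2 * Q := by
    have := Nat.ceil_lt_add_one hQ0.le
    linarith
  have e5 : Q ^ (1 - 2 * β) = (t + 1) ^ (-(2 - 1 / β)) := by
    rw [hQdef, ← Real.rpow_mul ht1.le]
    congr 1
    field_simp
    ring
  have eP : (t + 1) ^ (-(2 - 1 / β)) = Q / (t + 1) ^ 2 := by
    rw [show -(2 - 1/β) = 1/β - 2 by ring, Real.rpow_sub ht1, hQdef]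
    norm_num
  -- head bound
  have hterm : ∀ j : ℕ, ((j : ℝ) + 1) ^ (-(2 * β)) * exp (-2 * ((j : ℝ) + 1) ^ (-β) * t)
      ≤ exp 2 / (t + 1) ^ 2 := by
    intro j
    set k : ℝ := (j : ℝ) + 1 with hk
    have hk1 : (1:ℝ) ≤ k := by rw [hk]; have := Nat.cast_nonneg (α := ℝ) j; linarith
    have hk0 : (0:ℝ) < k := by linarith
    set a : ℝ := k ^ (-β) with hadef
    have ha0 : (0:ℝ) < a := by positivity
    have ha1 : a ≤ 1 := Real.rpow_le_one_of_one_le_of_nonpos hk1 (by linarith)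
    have ha2 : a ^ 2 = k ^ (-(2 * β)) := by
      rw [hadef, ← Real.rpow_natCast (k ^ (-β)) 2, ← Real.rpow_mul hk0.le]
      norm_num
      ring_nf
    have hexp2 : exp (-2 * a * t) ≤ exp 2 * exp (-(2 * a * (t + 1))) := by
      rw [show -2 * a * t = 2 * a + -(2 * a * (t + 1)) by ring, Real.exp_add]
      exact mul_le_mul_of_nonneg_right (exp_le_exp.2 (by linarith)) (exp_pos _).le
    have hexp3 : exp (-(2 * a * (t + 1))) ≤ 4 / (2 * a * (t + 1)) ^ 2 := by
      rw [le_div_iff₀ (by positivity)]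
      have h := sq_mul_exp_neg_le (show (0:ℝ) ≤ 2 * a * (t + 1) by positivity)
      linarith
    calc k ^ (-(2 * β)) * exp (-2 * a * t)
        ≤ k ^ (-(2 * β)) * (exp 2 * (4 / (2 * a * (t + 1)) ^ 2)) := by
          apply mul_le_mul_of_nonneg_left _ (by positivity)
          exact le_trans hexp2 (mul_le_mul_of_nonneg_left hexp3 (exp_pos _).le)
      _ = exp 2 * (k ^ (-(2 * β)) * (a ^ 2)⁻¹) / (t + 1) ^ 2 := by
          rw [mul_pow, mul_pow]
          field_simp
          ring
      _ = exp 2 / (t + 1) ^ 2 := by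
          rw [← ha2, mul_inv_cancel₀ (by positivity : (a:ℝ) ^ 2 ≠ 0), mul_one]
  have hhead : ∑ j ∈ Finset.range N, ((j : ℝ) + 1) ^ (-(2 * β)) * exp (-2 * ((j : ℝ) + 1) ^ (-β) * t)
      ≤ 2 * exp 2 * (t + 1) ^ (-(2 - 1 / β)) := by
    calc ∑ j ∈ Finset.range N, ((j : ℝ) + 1) ^ (-(2 * β)) * exp (-2 * ((j : ℝ) + 1) ^ (-β) * t)
        ≤ ∑ _j ∈ Finset.range N, exp 2 / (t + 1) ^ 2 :=
          Finset.sum_le_sum fun j _ => hterm j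
      _ = (N:ℝ) * (exp 2 / (t + 1) ^ 2) := by
          rw [Finset.sum_const, Finset.card_range, nsmul_eq_mul]
      _ ≤ (2 * Q) * (exp 2 / (t + 1) ^ 2) := by
          apply mul_le_mul_of_nonneg_right hN2Q (by positivity)
      _ = 2 * exp 2 * (Q / (t + 1) ^ 2) := by ring
      _ = 2 * exp 2 * (t + 1) ^ (-(2 - 1 / β)) := by rw [← eP]
  -- tail bound
  have htail : (∑' k : ℕ, ((k + N : ℕ) + 1 : ℝ) ^ (-(2 * β)) *
        exp (-2 * ((k + N : ℕ) + 1 : ℝ) ^ (-β) * t))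
      ≤ 1 / (2 * β - 1) * (t + 1) ^ (-(2 - 1 / β)) := by
    have hcast : ∀ k : ℕ, ((k + N : ℕ) : ℝ) + 1 = (N : ℝ) + k + 1 := by
      intro k; push_cast; ring
    have hle : ∀ k : ℕ, ((k + N : ℕ) + 1 : ℝ) ^ (-(2 * β)) *
          exp (-2 * ((k + N : ℕ) + 1 : ℝ) ^ (-β) * t)
        ≤ ((N : ℝ) + k + 1) ^ (-(2 * β)) := by
      intro k
      calc ((k + N : ℕ) + 1 : ℝ) ^ (-(2 * β)) * exp (-2 * ((k + N : ℕ) + 1 : ℝ) ^ (-β) * t)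
          ≤ ((k + N : ℕ) + 1 : ℝ) ^ (-(2 * β)) := term_le_base β t ht (k + N)
        _ = ((N : ℝ) + k + 1) ^ (-(2 * β)) := by rw [hcast]
    have hsum1 : Summable (fun k : ℕ => ((k + N : ℕ) + 1 : ℝ) ^ (-(2 * β)) *
        exp (-2 * ((k + N : ℕ) + 1 : ℝ) ^ (-β) * t)) :=
      (summable_nat_add_iff N).2 (summable_term β hβ t ht)
    have hsum2 : Summable (fun k : ℕ => ((N : ℝ) + k + 1) ^ (-(2 * β))) := by
      apply Summable.of_nonneg_of_le (fun k => by positivity) _ (summable_base β hβ)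
      intro k
      apply Real.rpow_le_rpow_of_nonpos (by positivity) (by linarith [hN0R.le] : ((k:ℝ)) + 1 ≤ (N:ℝ) + k + 1) (by linarith)
    calc (∑' k : ℕ, ((k + N : ℕ) + 1 : ℝ) ^ (-(2 * β)) *
          exp (-2 * ((k + N : ℕ) + 1 : ℝ) ^ (-β) * t))
        ≤ ∑' k : ℕ, ((N : ℝ) + k + 1) ^ (-(2 * β)) := Summable.tsum_le_tsum hle hsum1 hsum2
      _ ≤ (N : ℝ) ^ (1 - 2 * β) / (2 * β - 1) := by
          exact tsum_tail_rpow_le (2 * β) (by linarith) N hN1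
      _ ≤ Q ^ (1 - 2 * β) / (2 * β - 1) := by
          have h := Real.rpow_le_rpow_of_nonpos hQ0 hNQ (by linarith : 1 - 2 * β ≤ 0)
          exact (div_le_div_iff_of_pos_right h2β).2 h
      _ = 1 / (2 * β - 1) * (t + 1) ^ (-(2 - 1 / β)) := by rw [e5]; ring
  rw [← Summable.sum_add_tsum_nat_add N (summable_term β hβ t ht)]
  calc (∑ j ∈ Finset.range N, ((j : ℝ) + 1) ^ (-(2 * β)) * exp (-2 * ((j : ℝ) + 1) ^ (-β) * t))
        + (∑' k : ℕ, ((k + N : ℕ) + 1 : ℝ) ^ (-(2 * β)) *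
            exp (-2 * ((k + N : ℕ) + 1 : ℝ) ^ (-β) * t))
      ≤ 2 * exp 2 * (t + 1) ^ (-(2 - 1 / β))
        + 1 / (2 * β - 1) * (t + 1) ^ (-(2 - 1 / β)) := add_le_add hhead htail
    _ = (2 * exp 2 + 1 / (2 * β - 1)) * (t + 1) ^ (-(2 - 1 / β)) := by ring

private lemma integrand_cont (β t : ℝ) (hβ : 1 < β) :
    Continuous (fun u : ℝ => u ^ (1 - 1 / β) * exp (-2 * u * t)) := by
  have hp : (0:ℝ) ≤ 1 - 1 / β := by
    have : 1 / β < 1 := by rw [div_lt_one (by linarith)]; linarith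
    linarith
  exact (Real.continuous_rpow_const hp).mul
    (Real.continuous_exp.comp (by continuity))

private lemma lemC (β : ℝ) (hβ : 1 < β) :
    ∃ c : ℝ, 0 < c ∧ ∀ t : ℝ, 0 ≤ t →
      c * (t + 1) ^ (-(2 - 1 / β)) ≤
        ∫ u in (0:ℝ)..1, u ^ (1 - 1 / β) * exp (-2 * u * t) := by
  have hβ0 : (0:ℝ) < β := by linarith
  have hp1 : (0:ℝ) < 1 / β := by positivity
  have hp2 : 1 / β < 1 := by rw [div_lt_one hβ0]; linarith
  refine ⟨exp (-2) / (2 - 1 / β), div_pos (exp_pos _) (by linarith), ?_⟩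
  intro t ht
  have ht1 : (0:ℝ) < t + 1 := by linarith
  set s : ℝ := (t + 1)⁻¹ with hsdef
  have hs0 : (0:ℝ) < s := by positivity
  have hs1 : s ≤ 1 := by
    rw [hsdef]
    rw [inv_le_one_iff₀]
    right; linarith
  have hint : ∀ a b : ℝ, IntervalIntegrable
      (fun u : ℝ => u ^ (1 - 1 / β) * exp (-2 * u * t)) MeasureTheory.volume a b :=
    fun a b => (integrand_cont β t hβ).intervalIntegrable a b
  have hsplit : (∫ u in (0:ℝ)..1, u ^ (1 - 1 / β) * exp (-2 * u * t))
      = (∫ u in (0:ℝ)..s, u ^ (1 - 1 / β) * exp (-2 * u * t))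
        + ∫ u in s..(1:ℝ), u ^ (1 - 1 / β) * exp (-2 * u * t) :=
    (intervalIntegral.integral_add_adjacent_intervals (hint 0 s) (hint s 1)).symm
  have h2 : 0 ≤ ∫ u in s..(1:ℝ), u ^ (1 - 1 / β) * exp (-2 * u * t) := by
    apply intervalIntegral.integral_nonneg hs1
    intro u hu
    exact mul_nonneg (Real.rpow_nonneg (le_trans hs0.le hu.1) _) (exp_pos _).le
  have h3 : (∫ u in (0:ℝ)..s, u ^ (1 - 1 / β) * exp (-2)) ≤
      ∫ u in (0:ℝ)..s, u ^ (1 - 1 / β) * exp (-2 * u * t) := by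
    apply intervalIntegral.integral_mono_on hs0.le
      (((Real.continuous_rpow_const (by linarith)).mul continuous_const).intervalIntegrable 0 s)
      (hint 0 s)
    intro u hu
    apply mul_le_mul_of_nonneg_left _ (Real.rpow_nonneg hu.1 _)
    apply exp_le_exp.2
    have hut : u * t ≤ 1 := by
      have h := hu.2
      rw [hsdef] at h
      have h2 := mul_le_mul_of_nonneg_right h ht1.le
      rw [inv_mul_cancel₀ ht1.ne'] at h2
      nlinarith [hu.1]
    nlinarith
  have h4 : (∫ u in (0:ℝ)..s, u ^ (1 - 1 / β) * exp (-2))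
      = exp (-2) / (2 - 1 / β) * (t + 1) ^ (-(2 - 1 / β)) := by
    rw [intervalIntegral.integral_mul_const]
    rw [integral_rpow (Or.inl (by linarith : (-1:ℝ) < 1 - 1 / β))]
    rw [Real.zero_rpow (by intro h; nlinarith [h] : (1 - 1 / β) + 1 ≠ 0)]
    have hs : s ^ (1 - 1 / β + 1) = (t + 1) ^ (-(2 - 1 / β)) := by
      rw [hsdef, ← Real.rpow_neg_one (t + 1), ← Real.rpow_mul ht1.le]
      congr 1
      ring
    rw [hs]
    ring
  calc exp (-2) / (2 - 1 / β) * (t + 1) ^ (-(2 - 1 / β))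
      = ∫ u in (0:ℝ)..s, u ^ (1 - 1 / β) * exp (-2) := h4.symm
    _ ≤ ∫ u in (0:ℝ)..s, u ^ (1 - 1 / β) * exp (-2 * u * t) := h3
    _ ≤ _ := by rw [hsplit]; linarith

private lemma lemD (β : ℝ) (hβ : 1 < β) :
    ∃ C : ℝ, 0 < C ∧ ∀ t : ℝ, 0 ≤ t →
      (∫ u in (0:ℝ)..1, u ^ (1 - 1 / β) * exp (-2 * u * t)) ≤
        C * (t + 1) ^ (-(2 - 1 / β)) := by
  have hβ0 : (0:ℝ) < β := by linarith
  have hp1 : (0:ℝ) < 1 / β := by positivity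
  have hp2 : 1 / β < 1 := by rw [div_lt_one hβ0]; linarith
  have hA : (0:ℝ) < 2 - 1 / β := by linarith
  refine ⟨1 / (2 - 1 / β) + exp 2 * β, by positivity, ?_⟩
  intro t ht
  have ht1 : (0:ℝ) < t + 1 := by linarith
  set s : ℝ := (t + 1)⁻¹ with hsdef
  have hs0 : (0:ℝ) < s := by positivity
  have hs1 : s ≤ 1 := by
    rw [hsdef, inv_le_one_iff₀]; right; linarith
  have hint : ∀ a b : ℝ, IntervalIntegrable
      (fun u : ℝ => u ^ (1 - 1 / β) * exp (-2 * u * t)) MeasureTheory.volume a b :=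
    fun a b => (integrand_cont β t hβ).intervalIntegrable a b
  have hsplit : (∫ u in (0:ℝ)..1, u ^ (1 - 1 / β) * exp (-2 * u * t))
      = (∫ u in (0:ℝ)..s, u ^ (1 - 1 / β) * exp (-2 * u * t))
        + ∫ u in s..(1:ℝ), u ^ (1 - 1 / β) * exp (-2 * u * t) :=
    (intervalIntegral.integral_add_adjacent_intervals (hint 0 s) (hint s 1)).symm
  have hsP : s ^ (1 - 1 / β + 1) = (t + 1) ^ (-(2 - 1 / β)) := by
    rw [hsdef, ← Real.rpow_neg_one (t + 1), ← Real.rpow_mul ht1.le]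
    congr 1
    ring
  have eP : (t + 1) ^ (-(2 - 1 / β)) = (t + 1) ^ (1 / β) / (t + 1) ^ 2 := by
    rw [show -(2 - 1/β) = 1/β - ((2:ℕ):ℝ) by norm_num, Real.rpow_sub ht1,
      Real.rpow_natCast]
  -- first piece
  have h1 : (∫ u in (0:ℝ)..s, u ^ (1 - 1 / β) * exp (-2 * u * t))
      ≤ 1 / (2 - 1 / β) * (t + 1) ^ (-(2 - 1 / β)) := by
    have hmono : (∫ u in (0:ℝ)..s, u ^ (1 - 1 / β) * exp (-2 * u * t))
        ≤ ∫ u in (0:ℝ)..s, u ^ (1 - 1 / β) := by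
      apply intervalIntegral.integral_mono_on hs0.le (hint 0 s)
        ((Real.continuous_rpow_const (by linarith)).intervalIntegrable 0 s)
      intro u hu
      nth_rewrite 2 [← mul_one (u ^ (1 - 1/β))]
      apply mul_le_mul_of_nonneg_left _ (Real.rpow_nonneg hu.1 _)
      have : -2 * u * t ≤ 0 := by nlinarith [hu.1]
      calc exp (-2 * u * t) ≤ exp 0 := exp_le_exp.2 this
        _ = 1 := exp_zero
    have hval : (∫ u in (0:ℝ)..s, u ^ (1 - 1 / β))
        = 1 / (2 - 1 / β) * (t + 1) ^ (-(2 - 1 / β)) := by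
      rw [integral_rpow (Or.inl (by linarith : (-1:ℝ) < 1 - 1 / β))]
      rw [Real.zero_rpow (by intro h; nlinarith [h] : (1 - 1 / β) + 1 ≠ 0), hsP]
      ring
    linarith
  -- second piece
  have h2 : (∫ u in s..(1:ℝ), u ^ (1 - 1 / β) * exp (-2 * u * t))
      ≤ exp 2 * β * (t + 1) ^ (-(2 - 1 / β)) := by
    have huIcc : Set.uIcc s (1:ℝ) = Set.Icc s 1 := Set.uIcc_of_le hs1
    have hgcont : ContinuousOn (fun u : ℝ => exp 2 / (t + 1) ^ 2 * u ^ (1 - 1 / β - 2))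
        (Set.uIcc s 1) := by
      apply ContinuousOn.mul continuousOn_const
      intro u hu
      rw [huIcc] at hu
      exact (Real.continuousAt_rpow_const u _ (Or.inl (ne_of_gt (lt_of_lt_of_le hs0 hu.1)))).continuousWithinAt
    have hmono : (∫ u in s..(1:ℝ), u ^ (1 - 1 / β) * exp (-2 * u * t))
        ≤ ∫ u in s..(1:ℝ), exp 2 / (t + 1) ^ 2 * u ^ (1 - 1 / β - 2) := by
      apply intervalIntegral.integral_mono_on hs1 (hint s 1) hgcont.intervalIntegrable
      intro u hu
      have hu0 : (0:ℝ) < u := lt_of_lt_of_le hs0 hu.1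
      have hE : exp (-2 * u * t) ≤ exp 2 * (4 / (2 * u * (t + 1)) ^ 2) := by
        have e1 : exp (-2 * u * t) = exp (2 * u) * exp (-(2 * u * (t + 1))) := by
          rw [← Real.exp_add]; congr 1; ring
        have e2 : exp (2 * u) ≤ exp 2 := exp_le_exp.2 (by nlinarith [hu.2])
        have e3 : exp (-(2 * u * (t + 1))) ≤ 4 / (2 * u * (t + 1)) ^ 2 := by
          rw [le_div_iff₀ (by positivity)]
          have h := sq_mul_exp_neg_le (show (0:ℝ) ≤ 2 * u * (t + 1) by positivity)
          linarith
        calc exp (-2 * u * t) = exp (2 * u) * exp (-(2 * u * (t + 1))) := e1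
          _ ≤ exp 2 * (4 / (2 * u * (t + 1)) ^ 2) :=
            mul_le_mul e2 e3 (exp_pos _).le (exp_pos _).le
      have hru : u ^ (1 - 1 / β - 2) = u ^ (1 - 1 / β) / u ^ 2 := by
        rw [show (1 - 1/β - 2 : ℝ) = (1 - 1/β) - ((2:ℕ):ℝ) by norm_num,
          Real.rpow_sub hu0, Real.rpow_natCast]
      calc u ^ (1 - 1 / β) * exp (-2 * u * t)
          ≤ u ^ (1 - 1 / β) * (exp 2 * (4 / (2 * u * (t + 1)) ^ 2)) :=
            mul_le_mul_of_nonneg_left hE (Real.rpow_nonneg hu0.le _)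
        _ = exp 2 / (t + 1) ^ 2 * (u ^ (1 - 1 / β) / u ^ 2) := by
            rw [show (2 * u * (t + 1)) ^ 2 = 4 * u ^ 2 * (t + 1) ^ 2 by ring]
            field_simp
        _ = exp 2 / (t + 1) ^ 2 * u ^ (1 - 1 / β - 2) := by rw [hru]
    have hIval : (∫ u in s..(1:ℝ), u ^ (1 - 1 / β - 2)) ≤ β * (t + 1) ^ (1 / β) := by
      have hzero : (0:ℝ) ∉ Set.uIcc s (1:ℝ) := by
        rw [huIcc]
        intro h
        exact absurd h.1 (by linarith)
      rw [integral_rpow (Or.inr ⟨by intro h; nlinarith [h], hzero⟩)]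
      have hone : (1:ℝ) ^ (1 - 1 / β - 2 + 1) = 1 := Real.one_rpow _
      have hsval : s ^ (1 - 1 / β - 2 + 1) = (t + 1) ^ (1 / β) := by
        rw [hsdef, ← Real.rpow_neg_one (t + 1), ← Real.rpow_mul ht1.le]
        congr 1
        field_simp
        ring
      rw [hone, hsval, show (1 - 1/β - 2 + 1 : ℝ) = -(1/β) by ring]
      rw [div_neg, neg_le]
      have heq : (1 - (t + 1) ^ (1/β)) / (1/β) = β * (1 - (t + 1) ^ (1/β)) := by
        rw [div_div_eq_mul_div, div_one, mul_comm]
      rw [heq]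
      nlinarith [Real.one_le_rpow (show (1:ℝ) ≤ t + 1 by linarith) (show (0:ℝ) ≤ 1/β by positivity)]
    calc (∫ u in s..(1:ℝ), u ^ (1 - 1 / β) * exp (-2 * u * t))
        ≤ ∫ u in s..(1:ℝ), exp 2 / (t + 1) ^ 2 * u ^ (1 - 1 / β - 2) := hmono
      _ = exp 2 / (t + 1) ^ 2 * ∫ u in s..(1:ℝ), u ^ (1 - 1 / β - 2) :=
          intervalIntegral.integral_const_mul _ _
      _ ≤ exp 2 / (t + 1) ^ 2 * (β * (t + 1) ^ (1 / β)) :=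
          mul_le_mul_of_nonneg_left hIval (by positivity)
      _ = exp 2 * β * ((t + 1) ^ (1 / β) / (t + 1) ^ 2) := by ring
      _ = exp 2 * β * (t + 1) ^ (-(2 - 1 / β)) := by rw [← eP]
  calc (∫ u in (0:ℝ)..1, u ^ (1 - 1 / β) * exp (-2 * u * t))
      = (∫ u in (0:ℝ)..s, u ^ (1 - 1 / β) * exp (-2 * u * t))
        + ∫ u in s..(1:ℝ), u ^ (1 - 1 / β) * exp (-2 * u * t) := hsplit
    _ ≤ 1 / (2 - 1 / β) * (t + 1) ^ (-(2 - 1 / β)) + exp 2 * β * (t + 1) ^ (-(2 - 1 / β)) :=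
        add_le_add h1 h2
    _ = (1 / (2 - 1 / β) + exp 2 * β) * (t + 1) ^ (-(2 - 1 / β)) := by ring

/-- For `β > 1`, the forgetting-kernel sum `Σ_{j≥1} j^{-2β} e^{-2 j^{-β} t}` is comparable,
uniformly over `t ≥ 0`, both to `∫₀¹ u^{1-1/β} e^{-2ut} du` and to `(t+1)^{-(2-1/β)}`. -/
theorem kernel_sum_integral_comparison (β : ℝ) (hβ : 1 < β) :
    ∃ c₁ c₂ : ℝ, 0 < c₁ ∧ 0 < c₂ ∧ ∀ t : ℝ, 0 ≤ t →
      (c₁ * (∫ u in (0:ℝ)..1, u ^ (1 - 1 / β) * exp (-2 * u * t))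
          ≤ (∑' j : ℕ, ((j : ℝ) + 1) ^ (-(2 * β)) * exp (-2 * ((j : ℝ) + 1) ^ (-β) * t)) ∧
        (∑' j : ℕ, ((j : ℝ) + 1) ^ (-(2 * β)) * exp (-2 * ((j : ℝ) + 1) ^ (-β) * t))
          ≤ c₂ * ∫ u in (0:ℝ)..1, u ^ (1 - 1 / β) * exp (-2 * u * t)) ∧
      (c₁ * (t + 1) ^ (-(2 - 1 / β))
          ≤ (∑' j : ℕ, ((j : ℝ) + 1) ^ (-(2 * β)) * exp (-2 * ((j : ℝ) + 1) ^ (-β) * t)) ∧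
        (∑' j : ℕ, ((j : ℝ) + 1) ^ (-(2 * β)) * exp (-2 * ((j : ℝ) + 1) ^ (-β) * t))
          ≤ c₂ * (t + 1) ^ (-(2 - 1 / β))) := by
  obtain ⟨cA, hcA, hA⟩ := lemA β hβ
  obtain ⟨CB, hCB, hB⟩ := lemB β hβ
  obtain ⟨cC, hcC, hC⟩ := lemC β hβ
  obtain ⟨CD, hCD, hD⟩ := lemD β hβ
  refine ⟨min cA (cA / CD), max CB (CB / cC), lt_min hcA (div_pos hcA hCD),
    lt_of_lt_of_le hCB (le_max_left _ _), ?_⟩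
  intro t ht
  have hJ0 : 0 ≤ ∫ u in (0:ℝ)..1, u ^ (1 - 1 / β) * exp (-2 * u * t) := by
    apply intervalIntegral.integral_nonneg (by norm_num)
    intro u hu
    exact mul_nonneg (Real.rpow_nonneg hu.1 _) (exp_pos _).le
  have hP0 : (0:ℝ) < (t + 1) ^ (-(2 - 1 / β)) := by positivity
  refine ⟨⟨?_, ?_⟩, ?_, ?_⟩
  · calc min cA (cA / CD) * ∫ u in (0:ℝ)..1, u ^ (1 - 1 / β) * exp (-2 * u * t)
        ≤ (cA / CD) * ∫ u in (0:ℝ)..1, u ^ (1 - 1 / β) * exp (-2 * u * t) :=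
          mul_le_mul_of_nonneg_right (min_le_right _ _) hJ0
      _ ≤ (cA / CD) * (CD * (t + 1) ^ (-(2 - 1 / β))) :=
          mul_le_mul_of_nonneg_left (hD t ht) (div_pos hcA hCD).le
      _ = cA * (t + 1) ^ (-(2 - 1 / β)) := by field_simp
      _ ≤ _ := hA t ht
  · calc (∑' j : ℕ, ((j : ℝ) + 1) ^ (-(2 * β)) * exp (-2 * ((j : ℝ) + 1) ^ (-β) * t))
        ≤ CB * (t + 1) ^ (-(2 - 1 / β)) := hB t ht
      _ ≤ CB * ((∫ u in (0:ℝ)..1, u ^ (1 - 1 / β) * exp (-2 * u * t)) / cC) := by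
          apply mul_le_mul_of_nonneg_left _ hCB.le
          rw [le_div_iff₀ hcC]
          calc (t + 1) ^ (-(2 - 1 / β)) * cC = cC * (t + 1) ^ (-(2 - 1 / β)) := by ring
            _ ≤ _ := hC t ht
      _ = (CB / cC) * ∫ u in (0:ℝ)..1, u ^ (1 - 1 / β) * exp (-2 * u * t) := by ring
      _ ≤ max CB (CB / cC) * ∫ u in (0:ℝ)..1, u ^ (1 - 1 / β) * exp (-2 * u * t) :=
          mul_le_mul_of_nonneg_right (le_max_right _ _) hJ0
  · calc min cA (cA / CD) * (t + 1) ^ (-(2 - 1 / β))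
        ≤ cA * (t + 1) ^ (-(2 - 1 / β)) :=
          mul_le_mul_of_nonneg_right (min_le_left _ _) hP0.le
      _ ≤ _ := hA t ht
  · calc (∑' j : ℕ, ((j : ℝ) + 1) ^ (-(2 * β)) * exp (-2 * ((j : ℝ) + 1) ^ (-β) * t))
        ≤ CB * (t + 1) ^ (-(2 - 1 / β)) := hB t ht
      _ ≤ max CB (CB / cC) * (t + 1) ^ (-(2 - 1 / β)) :=
          mul_le_mul_of_nonneg_right (le_max_left _ _) hP0.le
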